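/- (Lewis's lemma.) Let A ∈ ℝ^{n×n} be an invertible tridiagonal matrix such that a_{k,k+1} ≠ 0 for k = 1, 2, …, n−1, and let X = A⁻¹. Then for all 1 ≤ k < n and 1 ≤ j ≤ n−k, the symmetric relation x_{k+j,k} = (∏_{i=k}^{k+j−1} a_{i+1,i}/a_{i,i+1}) · x_{k,k+j} holds. -/

import Mathlib

/-- Lewis's lemma: if `A` is an invertible tridiagonal matrix with nonzero
superdiagonal, then the entries of `X = A⁻¹` satisfy the symmetry relation
`x (k+j) k = (∏_{i=k}^{k+j-1} a (i+1) i / a i (i+1)) * x k (k+j)`.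
Here `a`, `x` are the (0-based) entry functions of `A` and `A⁻¹`. -/
theorem lewis_lemma {n : ℕ}
    (A : Matrix (Fin n) (Fin n) ℝ) (a x : ℕ → ℕ → ℝ)
    (hAa : ∀ i j : Fin n, A i j = a (i : ℕ) (j : ℕ))
    (hXx : ∀ i j : Fin n, A⁻¹ i j = x (i : ℕ) (j : ℕ))
    (htri : ∀ i j : Fin n, ((i : ℕ) + 1 < (j : ℕ) ∨ (j : ℕ) + 1 < (i : ℕ)) → A i j = 0)
    (hdet : IsUnit A.det)
    (hsup : ∀ k : ℕ, k + 1 < n → a k (k + 1) ≠ 0) :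
    ∀ k j : ℕ, 1 ≤ j → k + j < n →
      x (k + j) k = (∏ i ∈ Finset.Ico k (k + j), a (i + 1) i / a i (i + 1)) * x k (k + j) := by
  classical
  have hAX : A * A⁻¹ = 1 := Matrix.mul_nonsing_inv A hdet
  have hXA : A⁻¹ * A = 1 := Matrix.nonsing_inv_mul A hdet
  set b : ℕ → ℕ → ℝ := fun i j => if i < n ∧ j < n then a i j else 0 with hbdef
  set y : ℕ → ℕ → ℝ := fun i j => if i < n ∧ j < n then x i j else 0 with hydef
  have hba : ∀ i j : ℕ, i < n → j < n → b i j = a i j := by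
    intro i j hi hj; simp [hbdef, hi, hj]
  have hyx : ∀ i j : ℕ, i < n → j < n → y i j = x i j := by
    intro i j hi hj; simp [hydef, hi, hj]
  have hbA : ∀ i j : Fin n, b (i : ℕ) (j : ℕ) = A i j := by
    intro i j; rw [hba _ _ i.isLt j.isLt, hAa]
  have hyX : ∀ i j : Fin n, y (i : ℕ) (j : ℕ) = A⁻¹ i j := by
    intro i j; rw [hyx _ _ i.isLt j.isLt, hXx]
  have hyz : ∀ i j : ℕ, n ≤ i ∨ n ≤ j → y i j = 0 := by
    intro i j h; simp only [hydef]; rw [if_neg]; omega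
  have hbz : ∀ i j : ℕ, n ≤ i ∨ n ≤ j → b i j = 0 := by
    intro i j h; simp only [hbdef]; rw [if_neg]; omega
  have hbtri : ∀ i j : ℕ, i + 1 < j ∨ j + 1 < i → b i j = 0 := by
    intro i j h
    by_cases hij : i < n ∧ j < n
    · rw [hba i j hij.1 hij.2, ← hAa ⟨i, hij.1⟩ ⟨j, hij.2⟩]
      exact htri _ _ (by simpa using h)
    · simp only [hbdef]; rw [if_neg hij]
  have hbs : ∀ m : ℕ, m + 1 < n → b m (m + 1) ≠ 0 := by
    intro m hm; rw [hba m (m+1) (by omega) hm]; exact hsup m hm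
  -- three-term row equations
  have hrow : ∀ q p : ℕ, q < n → p < n →
      (if q = 0 then 0 else b q (q-1) * y (q-1) p) + b q q * y q p + b q (q+1) * y (q+1) p
        = if q = p then 1 else 0 := by
    intro q p hq hp
    have hM : (∑ m : Fin n, b q (m : ℕ) * y (m : ℕ) p) = if q = p then 1 else 0 := by
      have := congrFun (congrFun hAX ⟨q, hq⟩) ⟨p, hp⟩
      rw [Matrix.mul_apply, Matrix.one_apply] at this
      calc (∑ m : Fin n, b q (m : ℕ) * y (m : ℕ) p)
          = ∑ m : Fin n, A ⟨q, hq⟩ m * A⁻¹ m ⟨p, hp⟩ := by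
            refine Finset.sum_congr rfl fun m _ => ?_
            rw [hbA ⟨q, hq⟩ m, hyX m ⟨p, hp⟩]
        _ = if q = p then 1 else 0 := by
            rw [this]; simp [Fin.mk.injEq]
    rw [← hM, Fin.sum_univ_eq_sum_range (fun m => b q m * y m p) n]
    set M := max n (q + 2) with hMdef
    have h2 : ∑ m ∈ Finset.range n, b q m * y m p
        = ∑ m ∈ Finset.range M, b q m * y m p := by
      refine Finset.sum_subset (Finset.range_subset_range.2 (le_max_left _ _)) ?_
      intro m _ hmn
      rw [Finset.mem_range, not_lt] at hmn
      rw [hyz m p (Or.inl hmn), mul_zero]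
    have h3 : ∑ m ∈ Finset.Icc (q-1) (q+1), b q m * y m p
        = ∑ m ∈ Finset.range M, b q m * y m p := by
      refine Finset.sum_subset ?_ ?_
      · intro m hm; rw [Finset.mem_Icc] at hm; rw [Finset.mem_range]; omega
      · intro m _ hm
        rw [Finset.mem_Icc] at hm
        rw [hbtri q m (by omega), zero_mul]
    rw [h2, ← h3]
    rcases q with _ | q'
    · have he : Finset.Icc (0-1) (0+1) = ({0, 1} : Finset ℕ) := by
        ext m; simp [Finset.mem_Icc]; omega
      rw [he, Finset.sum_pair (by omega)]
      simp
    · have he : Finset.Icc (q'+1-1) (q'+1+1) = ({q', q'+1, q'+2} : Finset ℕ) := by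
        ext m; simp [Finset.mem_Icc]; omega
      rw [he, Finset.sum_insert (by simp only [Finset.mem_insert, Finset.mem_singleton]; omega), Finset.sum_insert (by simp only [Finset.mem_singleton]; omega),
        Finset.sum_singleton]
      simp only [Nat.add_sub_cancel, if_neg (Nat.succ_ne_zero q')]
      ring
  -- three-term column equations
  have hcol : ∀ p q : ℕ, p < n → q < n →
      (if q = 0 then 0 else y p (q-1) * b (q-1) q) + y p q * b q q + y p (q+1) * b (q+1) q
        = if p = q then 1 else 0 := by
    intro p q hp hq
    have hM : (∑ m : Fin n, y p (m : ℕ) * b (m : ℕ) q) = if p = q then 1 else 0 := by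
      have := congrFun (congrFun hXA ⟨p, hp⟩) ⟨q, hq⟩
      rw [Matrix.mul_apply, Matrix.one_apply] at this
      calc (∑ m : Fin n, y p (m : ℕ) * b (m : ℕ) q)
          = ∑ m : Fin n, A⁻¹ ⟨p, hp⟩ m * A m ⟨q, hq⟩ := by
            refine Finset.sum_congr rfl fun m _ => ?_
            rw [hbA m ⟨q, hq⟩, hyX ⟨p, hp⟩ m]
        _ = if p = q then 1 else 0 := by
            rw [this]; simp [Fin.mk.injEq]
    rw [← hM, Fin.sum_univ_eq_sum_range (fun m => y p m * b m q) n]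
    set M := max n (q + 2) with hMdef
    have h2 : ∑ m ∈ Finset.range n, y p m * b m q
        = ∑ m ∈ Finset.range M, y p m * b m q := by
      refine Finset.sum_subset (Finset.range_subset_range.2 (le_max_left _ _)) ?_
      intro m _ hmn
      rw [Finset.mem_range, not_lt] at hmn
      rw [hbz m q (Or.inl hmn), mul_zero]
    have h3 : ∑ m ∈ Finset.Icc (q-1) (q+1), y p m * b m q
        = ∑ m ∈ Finset.range M, y p m * b m q := by
      refine Finset.sum_subset ?_ ?_
      · intro m hm; rw [Finset.mem_Icc] at hm; rw [Finset.mem_range]; omega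
      · intro m _ hm
        rw [Finset.mem_Icc] at hm
        rw [hbtri m q (by omega), mul_zero]
    rw [h2, ← h3]
    rcases q with _ | q'
    · have he : Finset.Icc (0-1) (0+1) = ({0, 1} : Finset ℕ) := by
        ext m; simp [Finset.mem_Icc]; omega
      rw [he, Finset.sum_pair (by omega)]
      simp
    · have he : Finset.Icc (q'+1-1) (q'+1+1) = ({q', q'+1, q'+2} : Finset ℕ) := by
        ext m; simp [Finset.mem_Icc]; omega
      rw [he, Finset.sum_insert (by simp only [Finset.mem_insert, Finset.mem_singleton]; omega), Finset.sum_insert (by simp only [Finset.mem_singleton]; omega),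
        Finset.sum_singleton]
      simp only [Nat.add_sub_cancel, if_neg (Nat.succ_ne_zero q')]
      ring
  -- the gap-one symmetry, by telescoping the diagonal equations
  have hg : ∀ p : ℕ, p + 1 < n → b p (p+1) * y (p+1) p = b (p+1) p * y p (p+1) := by
    intro p
    induction p with
    | zero =>
      intro h1
      have hr := hrow 0 0 (by omega) (by omega)
      have hc := hcol 0 0 (by omega) (by omega)
      norm_num at hr hc
      linear_combination hr - hc
    | succ p ih =>
      intro h
      have hr := hrow (p+1) (p+1) (by omega) (by omega)
      have hc := hcol (p+1) (p+1) (by omega) (by omega)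
      simp only [Nat.add_sub_cancel, if_neg (Nat.succ_ne_zero p), if_pos rfl] at hr hc
      have hg' := ih (by omega)
      linear_combination hr - hc + hg'
  -- the ratio product
  set P : ℕ → ℕ → ℝ := fun p q => ∏ i ∈ Finset.Ico p q, (b (i+1) i / b i (i+1)) with hPdef
  have hkey : ∀ p m : ℕ, p ≤ m → m + 1 < n →
      P p (m+1) * b m (m+1) = P p m * b (m+1) m := by
    intro p m hpm hm
    have hstep : P p (m+1) = P p m * (b (m+1) m / b m (m+1)) :=
      Finset.prod_Ico_succ_top hpm _
    rw [hstep, mul_assoc, div_mul_cancel₀ _ (hbs m hm)]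
  -- main induction on the gap
  have main : ∀ d p : ℕ, p + d < n → y (p+d) p = P p (p+d) * y p (p+d) := by
    intro d
    induction d using Nat.strong_induction_on with
    | _ d ih =>
      match d with
      | 0 =>
        intro p hp
        simp [hPdef]
      | 1 =>
        intro p hp
        have h1 := hg p hp
        have h2 := hbs p hp
        have hIco : Finset.Ico p (p+1) = {p} := by ext m; simp [Finset.mem_Ico]
        have hP1 : P p (p+1) = b (p+1) p / b p (p+1) := by
          simp [hPdef, hIco]
        rw [hP1, div_mul_eq_mul_div, eq_div_iff h2]
        linear_combination h1
      | (d+2) =>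
        intro p hp
        have hm2 : p + d + 2 < n := by omega
        have E1 : y (p+d) p = P p (p+d) * y p (p+d) := ih d (by omega) p (by omega)
        have E2 : y (p+d+1) p = P p (p+d+1) * y p (p+d+1) := ih (d+1) (by omega) p (by omega)
        have hr := hrow (p+d+1) p (by omega) (by omega)
        have hc := hcol p (p+d+1) (by omega) (by omega)
        rw [if_neg (by omega : ¬ p+d+1 = 0), if_neg (by omega : ¬ p+d+1 = p)] at hr
        rw [if_neg (by omega : ¬ p+d+1 = 0), if_neg (by omega : ¬ p = p+d+1)] at hc
        simp only [Nat.add_sub_cancel] at hr hc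
        have K1 : P p (p+d+1) * b (p+d) (p+d+1) = P p (p+d) * b (p+d+1) (p+d) :=
          hkey p (p+d) (by omega) (by omega)
        have K2 : P p (p+d+2) * b (p+d+1) (p+d+2) = P p (p+d+1) * b (p+d+2) (p+d+1) :=
          hkey p (p+d+1) (by omega) hm2
        have hc2 := hbs (p+d+1) hm2
        have hfin : b (p+d+1) (p+d+2) *
            (y (p+d+2) p - P p (p+d+2) * y p (p+d+2)) = 0 := by
          linear_combination hr - P p (p+d+1) * hc - b (p+d+1) (p+d) * E1
            - b (p+d+1) (p+d+1) * E2 + y p (p+d) * K1 - y p (p+d+2) * K2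
        have := (mul_eq_zero.1 hfin).resolve_left hc2
        have hgoal : y (p + (d+2)) p = y (p+d+2) p := by norm_num [Nat.add_assoc]
        have hgoal2 : (p + (d+2)) = p+d+2 := by omega
        rw [hgoal2]
        linarith [this]
  -- conclude
  intro k j hj hkj
  have hk : k < n := by omega
  have hyk : x (k + j) k = y (k + j) k := (hyx _ _ hkj hk).symm
  have hyk2 : x k (k + j) = y k (k + j) := (hyx _ _ hk hkj).symm
  have hprod : (∏ i ∈ Finset.Ico k (k + j), a (i + 1) i / a i (i + 1)) = P k (k + j) := by
    refine Finset.prod_congr rfl fun i hi => ?_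
    rw [Finset.mem_Ico] at hi
    rw [hba (i+1) i (by omega) (by omega), hba i (i+1) (by omega) (by omega)]
  rw [hyk, hyk2, hprod]
  exact main j k hkj
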